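/- Suppose M has unique left inverses and A is a DTSM deterministic M-automaton over X accepting the normal subgroup Q ⊆ F. Let J ⊆ X* be the set of words w such that (m, w) labels a path in A from some terminal state to some terminal state for some m ∈ M, and let K = { w̄Q : w ∈ J } ⊆ F/Q. Then there is a well-defined injective group homomorphism σ : K → G(M) given by setting σ(w̄Q), for w ∈ J, to be the unique g ∈ M such that (g, w) labels a path in A between terminal states; in particular each such g lies in the group of units G(M). -/

import Mathlib

/-- A monoid `M` has *unique left inverses* if whenever `b * a = 1 = c * a` we have `b = c`. -/
def UniqueLeftInverses (M : Type) [Monoid M] : Prop :=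
  ∀ a b c : M, b * a = 1 → c * a = 1 → b = c

/-- The word problem of a group `H`, generated as a monoid by the image of `φ : X → H`,
is the set of words over `X` representing the identity of `H`. -/
def wordProblem {H : Type} [Group H] {X : Type} (φ : X → H) : Set (List X) :=
  {w | (w.map φ).prod = 1}

/-- A deterministic `M`-automaton over the alphabet `X`: a finite directed graph with
a distinguished initial state, a set of terminal states, and edges labelled by pairs in
`M × X`, such that each state has at most one outgoing edge per letter of `X`. -/
structure DetMAutomaton (M : Type) [Monoid M] (X : Type) where
  State : Type
  [stateFintype : Fintype State]
  init : State
  terminal : Set State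
  edge : State → M × X → State → Prop
  det : ∀ ⦃p : State⦄ ⦃x : X⦄ ⦃g h : M⦄ ⦃q r : State⦄,
      edge p (g, x) q → edge p (h, x) r → g = h ∧ q = r

namespace DetMAutomaton

variable {M : Type} [Monoid M] {X : Type}

/-- `A.Path p m w q` means there is a path from `p` to `q` labelled `(m, w)`: the
`X`-components of its edge labels spell out `w` in order, and the `M`-components
multiply in order to `m`. -/
inductive Path (A : DetMAutomaton M X) : A.State → M → List X → A.State → Prop
  | nil (p : A.State) : Path A p 1 [] p
  | cons {p q r : A.State} {g h : M} {x : X} {w : List X} :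
      A.edge p (g, x) q → Path A q h w r → Path A p (g * h) (x :: w) r

/-- The language accepted by a deterministic `M`-automaton: all words `w` such that some
path labelled `(1, w)` leads from the initial state to a terminal state. -/
def Lang (A : DetMAutomaton M X) : Set (List X) :=
  {w | ∃ q ∈ A.terminal, A.Path A.init 1 w q}

/-- A deterministic `M`-automaton is *deterministic terminal state minimal* (DTSM) if no
deterministic `M`-automaton accepting the same language has strictly fewer terminal states. -/
def DTSM (A : DetMAutomaton M X) : Prop :=
  ∀ B : DetMAutomaton M X, B.Lang = A.Lang → Nat.card A.terminal ≤ Nat.card B.terminal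

end DetMAutomaton

namespace AutomAux
open DetMAutomaton

variable {M : Type} [Monoid M] {X : Type} {A : DetMAutomaton M X}

lemma path_nil_inv {p q : A.State} {m : M} (h : A.Path p m [] q) : m = 1 ∧ q = p := by
  cases h; exact ⟨rfl, rfl⟩

lemma path_cons_inv {p q : A.State} {m : M} {x : X} {w : List X}
    (h : A.Path p m (x :: w) q) :
    ∃ g s h', A.edge p (g, x) s ∧ A.Path s h' w q ∧ m = g * h' := by
  cases h with
  | cons e hp => exact ⟨_, _, _, e, hp, rfl⟩

lemma path_det : ∀ {w : List X} {p q q' : A.State} {m m' : M},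
    A.Path p m w q → A.Path p m' w q' → m = m' ∧ q = q' := by
  intro w
  induction w with
  | nil =>
    intro p q q' m m' h h'
    obtain ⟨rfl, rfl⟩ := path_nil_inv h
    obtain ⟨rfl, rfl⟩ := path_nil_inv h'
    exact ⟨rfl, rfl⟩
  | cons x t ih =>
    intro p q q' m m' h h'
    obtain ⟨g, s, h1, e, hp, rfl⟩ := path_cons_inv h
    obtain ⟨g', s', h1', e', hp', rfl⟩ := path_cons_inv h'
    obtain ⟨rfl, rfl⟩ := A.det e e'
    obtain ⟨rfl, rfl⟩ := ih hp hp'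
    exact ⟨rfl, rfl⟩

lemma path_comp {p q r : A.State} {m n : M} {w w' : List X}
    (h : A.Path p m w q) (h' : A.Path q n w' r) :
    A.Path p (m * n) (w ++ w') r := by
  revert h'
  induction h with
  | nil p => intro h'; simpa using h'
  | cons e hp ih =>
    intro h'
    simpa [mul_assoc] using DetMAutomaton.Path.cons e (ih h')

lemma path_decomp : ∀ {w w' : List X} {p r : A.State} {m : M},
    A.Path p m (w ++ w') r →
    ∃ q n n', A.Path p n w q ∧ A.Path q n' w' r ∧ m = n * n' := by
  intro w
  induction w with
  | nil =>
    intro w' p r m h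
    exact ⟨p, 1, m, DetMAutomaton.Path.nil p, h, (one_mul m).symm⟩
  | cons x t ih =>
    intro w' p r m h
    obtain ⟨g, s, h1, e, hp, rfl⟩ := path_cons_inv (by simpa using h)
    obtain ⟨q, n, n', h₁, h₂, rfl⟩ := ih hp
    exact ⟨q, g * n, n', DetMAutomaton.Path.cons e h₁, h₂, (mul_assoc _ _ _).symm⟩

/-- The automaton with the same transition structure but new initial state and terminal set. -/
def reterm (A : DetMAutomaton M X) (i : A.State) (S : Set A.State) : DetMAutomaton M X :=
  { State := A.State
    stateFintype := A.stateFintype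
    init := i
    terminal := S
    edge := A.edge
    det := fun _ _ _ _ _ _ h1 h2 => A.det h1 h2 }

lemma reterm_path {i : A.State} {S : Set A.State} : ∀ {w : List X} {p q : A.State} {m : M},
    (reterm A i S).Path p m w q ↔ A.Path p m w q := by
  intro w
  induction w with
  | nil =>
    intro p q m
    constructor
    · intro h
      obtain ⟨rfl, rfl⟩ := path_nil_inv (A := reterm A i S) h
      exact DetMAutomaton.Path.nil (A := A) _
    · intro h
      obtain ⟨rfl, rfl⟩ := path_nil_inv (A := A) h
      exact DetMAutomaton.Path.nil (A := reterm A i S) _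
  | cons x t ih =>
    intro p q m
    constructor
    · intro h
      obtain ⟨g, s, h', e, hp, rfl⟩ := path_cons_inv (A := reterm A i S) h
      exact DetMAutomaton.Path.cons (A := A) e (ih.mp hp)
    · intro h
      obtain ⟨g, s, h', e, hp, rfl⟩ := path_cons_inv (A := A) h
      exact DetMAutomaton.Path.cons (A := reterm A i S) e (ih.mpr hp)

lemma reterm_lang {i : A.State} {S : Set A.State} :
    (reterm A i S).Lang = {w | ∃ q ∈ S, A.Path i 1 w q} := by
  ext w
  simp only [Lang, Set.mem_setOf_eq, reterm_path]
  exact exists_congr fun q => and_congr Iff.rfl reterm_path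

end AutomAux

open AutomAux

/-- **Lemma 8.** Suppose `M` has unique left inverses and `A` is a DTSM deterministic
`M`-automaton accepting the normal subgroup `Q` of the free group `F` (generated as a monoid
by `X`). Let `K = { w̄Q : w ∈ J }` where `J` is the set of words read along paths between
terminal states. Then `K` is a subgroup of `F/Q` and there is a well-defined injective group
homomorphism `σ : K → G(M)` sending `w̄Q` to the unique `g ∈ M` such that `(g, w)` labels a
path between terminal states. -/
theorem DetMAutomaton.embedding_into_units
    {M : Type} [Monoid M] (hM : UniqueLeftInverses M)
    {F : Type} [Group F] [IsFreeGroup F]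
    {X : Type} [Fintype X] (ι : X → F)
    (hgen : ∀ f : F, ∃ w : List X, (w.map ι).prod = f)
    (Q : Subgroup F) [Q.Normal] (A : DetMAutomaton M X)
    (hacc : A.Lang = {w : List X | (w.map ι).prod ∈ Q}) (hmin : A.DTSM) :
    ∃ K : Subgroup (F ⧸ Q),
      (K : Set (F ⧸ Q)) =
        {x : F ⧸ Q | ∃ w : List X,
          (∃ m : M, ∃ p ∈ A.terminal, ∃ r ∈ A.terminal, A.Path p m w r) ∧
          (QuotientGroup.mk ((w.map ι).prod) : F ⧸ Q) = x} ∧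
      ∃ σ : K →* Mˣ, Function.Injective σ ∧
        ∀ (w : List X) (g : M),
          (∃ p ∈ A.terminal, ∃ r ∈ A.terminal, A.Path p g w r) →
          ∃ hmem : (QuotientGroup.mk ((w.map ι).prod) : F ⧸ Q) ∈ K,
            ((σ ⟨QuotientGroup.mk ((w.map ι).prod), hmem⟩ : Mˣ) : M) = g := by
  classical
  haveI := A.stateFintype
  -- language characterisation
  have hlang : ∀ w : List X, (∃ q ∈ A.terminal, A.Path A.init 1 w q) ↔ (w.map ι).prod ∈ Q := by
    intro w
    have := Set.ext_iff.mp hacc w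
    simpa [DetMAutomaton.Lang] using this
  have hpr : ∀ u w : List X, ((u ++ w).map ι).prod = (u.map ι).prod * (w.map ι).prod := by
    intro u w; simp
  have h1mk : ∀ u : List X, (u.map ι).prod ∈ Q →
      (QuotientGroup.mk ((u.map ι).prod) : F ⧸ Q) = 1 := fun u h =>
    (QuotientGroup.eq_one_iff _).mpr h
  have hcls : ∀ u : List X, (QuotientGroup.mk ((u.map ι).prod) : F ⧸ Q) = 1 →
      (u.map ι).prod ∈ Q := fun u h => (QuotientGroup.eq_one_iff _).mp h
  -- reachable (by an accepting run) states are terminal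
  have hR0 : ∀ t : A.State,
      (∃ u : List X, (u.map ι).prod ∈ Q ∧ A.Path A.init 1 u t) → t ∈ A.terminal := by
    rintro t ⟨u, hu, hp⟩
    obtain ⟨q, hq, hp'⟩ := (hlang u).mpr hu
    obtain ⟨-, h⟩ := path_det hp hp'
    rw [h]; exact hq
  have hRinit : ∃ u : List X, (u.map ι).prod ∈ Q ∧ A.Path A.init 1 u A.init :=
    ⟨[], by simpa using Q.one_mem, DetMAutomaton.Path.nil _⟩
  have hinitT : A.init ∈ A.terminal := hR0 _ hRinit
  -- the transfer lemma: from a reachable state, every Q-word labels a (1,·)-path to a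
  -- reachable state
  have hR2 : ∀ t : A.State, (∃ u : List X, (u.map ι).prod ∈ Q ∧ A.Path A.init 1 u t) →
      ∀ w : List X, (w.map ι).prod ∈ Q →
      ∃ s, A.Path t 1 w s ∧ (∃ u : List X, (u.map ι).prod ∈ Q ∧ A.Path A.init 1 u s) := by
    rintro t ⟨u, hu, hp⟩ w hw
    have huw : ((u ++ w).map ι).prod ∈ Q := by rw [hpr]; exact Q.mul_mem hu hw
    obtain ⟨q, hq, hpq⟩ := (hlang _).mpr huw
    obtain ⟨t', n, n', h1, h2, h3⟩ := path_decomp hpq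
    obtain ⟨rfl, rfl⟩ := path_det h1 hp
    have hn' : n' = 1 := by simpa using h3.symm
    subst hn'
    exact ⟨q, h2, ⟨u ++ w, huw, hpq⟩⟩
  -- every terminal state is reachable by an accepting run (uses DTSM)
  have hreach : ∀ t ∈ A.terminal,
      ∃ u : List X, (u.map ι).prod ∈ Q ∧ A.Path A.init 1 u t := by
    have hsub : {t : A.State | ∃ u : List X, (u.map ι).prod ∈ Q ∧ A.Path A.init 1 u t}
        ⊆ A.terminal := fun t ht => hR0 t ht
    have hlangB : (reterm A A.init
        {t : A.State | ∃ u : List X, (u.map ι).prod ∈ Q ∧ A.Path A.init 1 u t}).Lang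
        = A.Lang := by
      rw [reterm_lang, hacc]
      ext w
      simp only [Set.mem_setOf_eq]
      constructor
      · rintro ⟨q, hq, hp⟩
        exact (hlang w).mp ⟨q, hsub hq, hp⟩
      · intro hw
        obtain ⟨q, hq, hp⟩ := (hlang w).mpr hw
        exact ⟨q, ⟨w, hw, hp⟩, hp⟩
    have hcard := hmin _ hlangB
    have heq : {t : A.State | ∃ u : List X, (u.map ι).prod ∈ Q ∧ A.Path A.init 1 u t}
        = A.terminal := by
      refine Set.eq_of_subset_of_ncard_le hsub ?_ (Set.toFinite _)
      rw [← Nat.card_coe_set_eq, ← Nat.card_coe_set_eq]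
      exact hcard
    intro t ht
    rw [← heq] at ht
    exact ht
  -- mutual reachability of terminal states by Q-word-labelled paths (uses DTSM)
  have hreach2 : ∀ s ∈ A.terminal, ∀ t ∈ A.terminal,
      ∃ y : List X, (y.map ι).prod ∈ Q ∧ A.Path s 1 y t := by
    intro s hs
    obtain ⟨us, hus, hpus⟩ := hreach s hs
    have hRSsub : {t : A.State | ∃ y : List X, (y.map ι).prod ∈ Q ∧ A.Path s 1 y t}
        ⊆ A.terminal := by
      rintro t ⟨y, hy, hp⟩
      refine hR0 t ⟨us ++ y, by rw [hpr]; exact Q.mul_mem hus hy, ?_⟩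
      simpa using path_comp hpus hp
    have hlangB : (reterm A s
        {t : A.State | ∃ y : List X, (y.map ι).prod ∈ Q ∧ A.Path s 1 y t}).Lang
        = A.Lang := by
      rw [reterm_lang, hacc]
      ext w
      simp only [Set.mem_setOf_eq]
      constructor
      · rintro ⟨q, hq, hpw⟩
        have hqT : q ∈ A.terminal := hRSsub hq
        have hbig : A.Path A.init (1 * 1) (us ++ w) q := path_comp hpus hpw
        have hacc' := (hlang (us ++ w)).mp ⟨q, hqT, by simpa using hbig⟩
        rw [hpr] at hacc'
        have := Q.mul_mem (Q.inv_mem hus) hacc'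
        simpa [inv_mul_cancel_left] using this
      · intro hw
        obtain ⟨q, hpq, hRq⟩ := hR2 s ⟨us, hus, hpus⟩ w hw
        exact ⟨q, ⟨w, hw, hpq⟩, hpq⟩
    have hcard := hmin _ hlangB
    have heq : {t : A.State | ∃ y : List X, (y.map ι).prod ∈ Q ∧ A.Path s 1 y t}
        = A.terminal := by
      refine Set.eq_of_subset_of_ncard_le hRSsub ?_ (Set.toFinite _)
      rw [← Nat.card_coe_set_eq, ← Nat.card_coe_set_eq]
      exact hcard
    intro t ht
    rw [← heq] at ht
    exact ht
  -- every label of a terminal-to-terminal path is a unit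
  have hunit : ∀ (w : List X) (g : M) (p r : A.State), p ∈ A.terminal → r ∈ A.terminal →
      A.Path p g w r → ∃ h : M, g * h = 1 ∧ h * g = 1 := by
    intro w g p r hp hr hpath
    obtain ⟨v, hv⟩ := hgen ((w.map ι).prod)⁻¹
    have hwv : ((w ++ v).map ι).prod ∈ Q := by
      rw [hpr, hv]; simpa using Q.one_mem
    obtain ⟨e, hpe, hRe⟩ := hR2 p (hreach p hp) (w ++ v) hwv
    obtain ⟨r', n, n', h1, h2, h3⟩ := path_decomp hpe
    obtain ⟨rfl, rfl⟩ := path_det hpath h1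
    have hgn : g * n' = 1 := h3.symm
    have heT : e ∈ A.terminal := hR0 e hRe
    obtain ⟨y, hy, hpy⟩ := hreach2 e heT p hp
    have hbig : A.Path r (n' * (1 * g)) (v ++ (y ++ w)) r :=
      path_comp h2 (path_comp hpy hpath)
    have hclass : ((v ++ (y ++ w)).map ι).prod ∈ Q := by
      rw [hpr, hpr, hv]
      have := Subgroup.Normal.conj_mem ‹Q.Normal› _ hy ((w.map ι).prod)⁻¹
      simpa [mul_assoc] using this
    obtain ⟨s2, hps2, -⟩ := hR2 r (hreach r hr) _ hclass
    obtain ⟨heq, -⟩ := path_det hbig hps2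
    exact ⟨n', hgn, by simpa using heq⟩
  -- uniqueness of labels of terminal-to-terminal paths for words in the same class
  have huniq : ∀ (w w' : List X) (g g' : M) (p r p' r' : A.State),
      p ∈ A.terminal → r ∈ A.terminal → p' ∈ A.terminal → r' ∈ A.terminal →
      A.Path p g w r → A.Path p' g' w' r' →
      (QuotientGroup.mk ((w.map ι).prod) : F ⧸ Q) = QuotientGroup.mk ((w'.map ι).prod) →
      g = g' := by
    intro w w' g g' p r p' r' hp hr hp' hr' hpath hpath' hww
    obtain ⟨z, hz⟩ := hgen (((w.map ι).prod * (w'.map ι).prod)⁻¹)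
    obtain ⟨y₁, hy₁, hpy₁⟩ := hreach2 r hr p' hp'
    obtain ⟨y₂, hy₂, hpy₂⟩ := hreach2 p hp p' hp'
    obtain ⟨y₃, hy₃, hpy₃⟩ := hreach2 r' hr' p' hp'
    have hW₁ : ((( w ++ (y₁ ++ (w' ++ z))).map ι).prod) ∈ Q := by
      apply hcls
      rw [hpr, hpr, hpr, hz]
      simp only [QuotientGroup.mk_mul, QuotientGroup.mk_inv]
      rw [h1mk _ hy₁, hww]
      group
    have hW₂ : (((y₂ ++ (w' ++ (y₃ ++ (w' ++ z)))).map ι).prod) ∈ Q := by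
      apply hcls
      rw [hpr, hpr, hpr, hpr, hz]
      simp only [QuotientGroup.mk_mul, QuotientGroup.mk_inv]
      rw [h1mk _ hy₂, h1mk _ hy₃, hww]
      group
    obtain ⟨e₁, hpe₁, -⟩ := hR2 p (hreach p hp) _ hW₁
    obtain ⟨a, n₁, m₁, ha1, ha2, ha3⟩ := path_decomp hpe₁
    obtain ⟨rfl, rfl⟩ := path_det hpath ha1
    obtain ⟨b, n₂, m₂, hb1, hb2, hb3⟩ := path_decomp ha2
    obtain ⟨rfl, rfl⟩ := path_det hpy₁ hb1
    obtain ⟨cc, n₃, m₃, hc1, hc2, hc3⟩ := path_decomp hb2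
    obtain ⟨rfl, rfl⟩ := path_det hpath' hc1
    have hgg'c : (g * g') * m₃ = 1 := by
      have hm₁ : m₁ = g' * m₃ := by rw [hb3, one_mul, hc3]
      rw [mul_assoc, ← hm₁]
      exact ha3.symm
    obtain ⟨e₂, hpe₂, -⟩ := hR2 p (hreach p hp) _ hW₂
    obtain ⟨a', n₁', m₁', ha1', ha2', ha3'⟩ := path_decomp hpe₂
    obtain ⟨rfl, rfl⟩ := path_det hpy₂ ha1'
    obtain ⟨b', n₂', m₂', hb1', hb2', hb3'⟩ := path_decomp ha2'
    obtain ⟨rfl, rfl⟩ := path_det hpath' hb1'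
    obtain ⟨cc', n₃', m₃', hc1', hc2', hc3'⟩ := path_decomp hb2'
    obtain ⟨rfl, rfl⟩ := path_det hpy₃ hc1'
    obtain ⟨dd', n₄', m₄', hd1', hd2', hd3'⟩ := path_decomp hc2'
    obtain ⟨rfl, rfl⟩ := path_det hpath' hd1'
    obtain ⟨rfl, -⟩ := path_det hc2 hd2'
    have h5 : g' * (1 * (g' * m₃)) = 1 := by
      rw [← hd3', ← hc3', ← hb3']
      simpa using ha3'.symm
    have hg'g'c : (g' * g') * m₃ = 1 := by
      rw [mul_assoc]
      simpa using h5
    have hgg' : g * g' = g' * g' := hM m₃ _ _ hgg'c hg'g'c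
    obtain ⟨h', hg'h', hh'g'⟩ := hunit w' g' p' r' hp' hr' hpath'
    calc g = (g * g') * h' := by rw [mul_assoc, hg'h', mul_one]
      _ = (g' * g') * h' := by rw [hgg']
      _ = g' := by rw [mul_assoc, hg'h', mul_one]
  -- the subgroup K
  have Kone : (1 : F ⧸ Q) ∈ {x : F ⧸ Q | ∃ w : List X,
      (∃ m : M, ∃ p ∈ A.terminal, ∃ r ∈ A.terminal, A.Path p m w r) ∧
      (QuotientGroup.mk ((w.map ι).prod) : F ⧸ Q) = x} :=
    ⟨[], ⟨1, A.init, hinitT, A.init, hinitT, DetMAutomaton.Path.nil _⟩, by simp⟩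
  have Kmul : ∀ {x y : F ⧸ Q}, x ∈ {x : F ⧸ Q | ∃ w : List X,
      (∃ m : M, ∃ p ∈ A.terminal, ∃ r ∈ A.terminal, A.Path p m w r) ∧
      (QuotientGroup.mk ((w.map ι).prod) : F ⧸ Q) = x} →
      y ∈ {x : F ⧸ Q | ∃ w : List X,
      (∃ m : M, ∃ p ∈ A.terminal, ∃ r ∈ A.terminal, A.Path p m w r) ∧
      (QuotientGroup.mk ((w.map ι).prod) : F ⧸ Q) = x} →
      x * y ∈ {x : F ⧸ Q | ∃ w : List X,
      (∃ m : M, ∃ p ∈ A.terminal, ∃ r ∈ A.terminal, A.Path p m w r) ∧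
      (QuotientGroup.mk ((w.map ι).prod) : F ⧸ Q) = x} := by
    rintro x y ⟨w, ⟨m, p, hp, r, hr, hpath⟩, rfl⟩ ⟨w', ⟨m', p', hp', r', hr', hpath'⟩, rfl⟩
    obtain ⟨y₀, hy₀, hpy₀⟩ := hreach2 r hr p' hp'
    refine ⟨w ++ (y₀ ++ w'), ⟨m * (1 * m'), p, hp, r', hr',
      path_comp hpath (path_comp hpy₀ hpath')⟩, ?_⟩
    rw [hpr, hpr]
    simp only [QuotientGroup.mk_mul]
    rw [h1mk _ hy₀, one_mul]
  have Kinv : ∀ {x : F ⧸ Q}, x ∈ {x : F ⧸ Q | ∃ w : List X,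
      (∃ m : M, ∃ p ∈ A.terminal, ∃ r ∈ A.terminal, A.Path p m w r) ∧
      (QuotientGroup.mk ((w.map ι).prod) : F ⧸ Q) = x} →
      x⁻¹ ∈ {x : F ⧸ Q | ∃ w : List X,
      (∃ m : M, ∃ p ∈ A.terminal, ∃ r ∈ A.terminal, A.Path p m w r) ∧
      (QuotientGroup.mk ((w.map ι).prod) : F ⧸ Q) = x} := by
    rintro x ⟨w, ⟨m, p, hp, r, hr, hpath⟩, rfl⟩
    obtain ⟨v, hv⟩ := hgen ((w.map ι).prod)⁻¹
    have hwv : ((w ++ v).map ι).prod ∈ Q := by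
      rw [hpr, hv]; simpa using Q.one_mem
    obtain ⟨e, hpe, hRe⟩ := hR2 p (hreach p hp) (w ++ v) hwv
    obtain ⟨r', n, n', h1, h2, h3⟩ := path_decomp hpe
    obtain ⟨rfl, rfl⟩ := path_det hpath h1
    have heT : e ∈ A.terminal := hR0 e hRe
    refine ⟨v, ⟨n', r, hr, e, heT, h2⟩, ?_⟩
    rw [hv]
    simp [QuotientGroup.mk_inv]
  refine ⟨{ carrier := {x : F ⧸ Q | ∃ w : List X,
              (∃ m : M, ∃ p ∈ A.terminal, ∃ r ∈ A.terminal, A.Path p m w r) ∧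
              (QuotientGroup.mk ((w.map ι).prod) : F ⧸ Q) = x},
            one_mem' := Kone, mul_mem' := Kmul, inv_mem' := Kinv }, rfl, ?_⟩
  -- the embedding σ
  have hKwit : ∀ x : F ⧸ Q,
      (∃ w : List X, (∃ m : M, ∃ p ∈ A.terminal, ∃ r ∈ A.terminal, A.Path p m w r) ∧
        (QuotientGroup.mk ((w.map ι).prod) : F ⧸ Q) = x) →
      ∃ u : Mˣ, ∀ (w : List X) (g : M) (p r : A.State), p ∈ A.terminal → r ∈ A.terminal →
        A.Path p g w r → (QuotientGroup.mk ((w.map ι).prod) : F ⧸ Q) = x → (u : M) = g := by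
    rintro x ⟨w₀, ⟨g₀, p₀, hp₀, r₀, hr₀, hpath₀⟩, hx₀⟩
    obtain ⟨h₀, hh1, hh2⟩ := hunit w₀ g₀ p₀ r₀ hp₀ hr₀ hpath₀
    refine ⟨⟨g₀, h₀, hh1, hh2⟩, ?_⟩
    intro w g p r hp hr hpath hxw
    exact (huniq w w₀ g g₀ p r p₀ r₀ hp hr hp₀ hr₀ hpath hpath₀ (hxw.trans hx₀.symm)).symm
  choose σ₀ hσ₀ using hKwit
  refine ⟨MonoidHom.mk' (fun a => σ₀ a.1 a.2) ?_, ?_, ?_⟩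
  · intro a b
    obtain ⟨wa, ⟨ma, pa, hpa, ra, hra, hpa'⟩, hxa⟩ :
        ∃ w : List X, (∃ m : M, ∃ p ∈ A.terminal, ∃ r ∈ A.terminal, A.Path p m w r) ∧
          (QuotientGroup.mk ((w.map ι).prod) : F ⧸ Q) = a.1 := a.2
    obtain ⟨wb, ⟨mb, pb, hpb, rb, hrb, hpb'⟩, hxb⟩ :
        ∃ w : List X, (∃ m : M, ∃ p ∈ A.terminal, ∃ r ∈ A.terminal, A.Path p m w r) ∧
          (QuotientGroup.mk ((w.map ι).prod) : F ⧸ Q) = b.1 := b.2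
    obtain ⟨y₀, hy₀, hpy₀⟩ := hreach2 ra hra pb hpb
    have hva : ((σ₀ a.1 a.2 : Mˣ) : M) = ma := hσ₀ a.1 a.2 wa ma pa ra hpa hra hpa' hxa
    have hvb : ((σ₀ b.1 b.2 : Mˣ) : M) = mb := hσ₀ b.1 b.2 wb mb pb rb hpb hrb hpb' hxb
    have hclass : (QuotientGroup.mk (((wa ++ (y₀ ++ wb)).map ι).prod) : F ⧸ Q) = (a * b).1 := by
      rw [hpr, hpr]
      simp only [QuotientGroup.mk_mul]
      rw [h1mk _ hy₀, one_mul, hxa, hxb]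
      rfl
    have hvab : ((σ₀ (a * b).1 (a * b).2 : Mˣ) : M) = ma * (1 * mb) :=
      hσ₀ (a * b).1 (a * b).2 (wa ++ (y₀ ++ wb)) (ma * (1 * mb)) pa rb hpa hrb
        (path_comp hpa' (path_comp hpy₀ hpb')) hclass
    apply Units.ext
    rw [Units.val_mul, hva, hvb, hvab, one_mul]
  · refine (injective_iff_map_eq_one _).mpr ?_
    intro a ha
    obtain ⟨w, ⟨m, p, hp, r, hr, hpath⟩, hxa⟩ :
        ∃ w : List X, (∃ m : M, ∃ p ∈ A.terminal, ∃ r ∈ A.terminal, A.Path p m w r) ∧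
          (QuotientGroup.mk ((w.map ι).prod) : F ⧸ Q) = a.1 := a.2
    have hva : ((σ₀ a.1 a.2 : Mˣ) : M) = m := hσ₀ a.1 a.2 w m p r hp hr hpath hxa
    have hm : m = 1 := by
      rw [← hva, show σ₀ a.1 a.2 = 1 from ha, Units.val_one]
    obtain ⟨u, hu, hpu⟩ := hreach p hp
    have hbig : A.Path A.init (1 * m) (u ++ w) r := path_comp hpu hpath
    have haccW : ((u ++ w).map ι).prod ∈ Q := (hlang _).mp ⟨r, hr, by simpa [hm] using hbig⟩
    rw [hpr] at haccW
    have hwQ : (w.map ι).prod ∈ Q := by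
      have := Q.mul_mem (Q.inv_mem hu) haccW
      simpa [inv_mul_cancel_left] using this
    apply Subtype.ext
    have := h1mk _ hwQ
    rw [hxa] at this
    exact this
  · rintro w g ⟨p, hp, r, hr, hpath⟩
    refine ⟨⟨w, ⟨g, p, hp, r, hr, hpath⟩, rfl⟩, ?_⟩
    exact hσ₀ _ ⟨w, ⟨g, p, hp, r, hr, hpath⟩, rfl⟩ w g p r hp hr hpath rfl
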